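/- Let n : ℕ with n ≥ 2, and let v, v' : Fin (n+1) → ℍ satisfy ∑ a, normSq (v a) = 1, ∑ a, normSq (v' a) = 1, μ(v) = 0 and μ(v') = 0. Then there exists a special unitary matrix U ∈ SU(n+1) (a matrix in Matrix.specialUnitaryGroup (Fin (n+1)) ℂ) such that v' a = ∑ b, (U a b : ℍ) * (v b) for all a, where complex matrix entries act on quaternions by left multiplication through the embedding ℂ → ℍ. (This is the transitivity of the diagonal SU(n+1)-action on the sphere-level zero set of the U(1)-moment map, used in identifying μ⁻¹(0) with the homogeneous space SU(n+1)/(SU(2)×SU(n−1)).) -/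

import Mathlib

open Quaternion Finset

/-- The imaginary unit `i` of the quaternions. -/
noncomputable def qi : Quaternion ℝ := ⟨0, 1, 0, 0⟩

/-- The canonical embedding of `ℂ` into the quaternions. -/
noncomputable def cq (c : ℂ) : Quaternion ℝ := ⟨c.re, c.im, 0, 0⟩

/-- The diagonal `U(1)`-moment map on `ℍ^{n+1}`. -/
noncomputable def μ {n : ℕ} (v : Fin (n + 1) → Quaternion ℝ) : Quaternion ℝ :=
  ∑ a, star (v a) * qi * v a

section aux

variable {ι : Type*}

lemma qsum_re (s : Finset ι) (f : ι → Quaternion ℝ) :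
    (∑ a ∈ s, f a).re = ∑ a ∈ s, (f a).re :=
  map_sum (AddMonoidHom.mk' QuaternionAlgebra.re fun _ _ => rfl) f s

lemma qsum_imI (s : Finset ι) (f : ι → Quaternion ℝ) :
    (∑ a ∈ s, f a).imI = ∑ a ∈ s, (f a).imI :=
  map_sum (AddMonoidHom.mk' QuaternionAlgebra.imI fun _ _ => rfl) f s

lemma qsum_imJ (s : Finset ι) (f : ι → Quaternion ℝ) :
    (∑ a ∈ s, f a).imJ = ∑ a ∈ s, (f a).imJ :=
  map_sum (AddMonoidHom.mk' QuaternionAlgebra.imJ fun _ _ => rfl) f s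

lemma qsum_imK (s : Finset ι) (f : ι → Quaternion ℝ) :
    (∑ a ∈ s, f a).imK = ∑ a ∈ s, (f a).imK :=
  map_sum (AddMonoidHom.mk' QuaternionAlgebra.imK fun _ _ => rfl) f s

lemma term_comp (q : Quaternion ℝ) : star q * qi * q =
    ⟨0, q.re ^ 2 + q.imI ^ 2 - q.imJ ^ 2 - q.imK ^ 2,
      2 * (q.imI * q.imJ - q.re * q.imK), 2 * (q.re * q.imJ + q.imI * q.imK)⟩ := by
  apply Quaternion.ext <;>
    simp only [Quaternion.re_mul, Quaternion.imI_mul, Quaternion.imJ_mul, Quaternion.imK_mul,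
      Quaternion.re_star, Quaternion.imI_star, Quaternion.imJ_star, Quaternion.imK_star] <;>
    simp only [qi] <;>
    ring

lemma mu_comp {n : ℕ} (u : Fin (n + 1) → Quaternion ℝ) : μ u =
    ⟨0, ∑ k, ((u k).re ^ 2 + (u k).imI ^ 2 - (u k).imJ ^ 2 - (u k).imK ^ 2),
      ∑ k, 2 * ((u k).imI * (u k).imJ - (u k).re * (u k).imK),
      ∑ k, 2 * ((u k).re * (u k).imJ + (u k).imI * (u k).imK)⟩ := by
  unfold μ
  apply Quaternion.ext
  · rw [qsum_re]
    simp [term_comp]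
  · rw [qsum_imI]
    simp [term_comp]
  · rw [qsum_imJ]
    simp [term_comp]
  · rw [qsum_imK]
    simp [term_comp]

lemma inner_re {m : ℕ} (x y : EuclideanSpace ℂ (Fin m)) :
    (inner ℂ x y : ℂ).re = ∑ i, ((x i).re * (y i).re + (x i).im * (y i).im) := by
  rw [PiLp.inner_apply]
  simp only [RCLike.inner_apply]
  rw [Complex.re_sum]
  refine Finset.sum_congr rfl fun i _ => ?_
  simp only [Complex.mul_re, Complex.conj_re, Complex.conj_im]
  ring

lemma inner_im {m : ℕ} (x y : EuclideanSpace ℂ (Fin m)) :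
    (inner ℂ x y : ℂ).im = ∑ i, ((x i).re * (y i).im - (x i).im * (y i).re) := by
  rw [PiLp.inner_apply]
  simp only [RCLike.inner_apply]
  rw [Complex.im_sum]
  refine Finset.sum_congr rfl fun i _ => ?_
  simp only [Complex.mul_im, Complex.conj_re, Complex.conj_im]
  ring

open Matrix in
lemma key_su (n : ℕ) (hn : 2 ≤ n) (z w z' w' : EuclideanSpace ℂ (Fin (n+1)))
    (hzz : inner ℂ z z = (1/2 : ℂ)) (hww : inner ℂ w w = (1/2 : ℂ)) (hzw : inner ℂ z w = (0:ℂ))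
    (hzz' : inner ℂ z' z' = (1/2 : ℂ)) (hww' : inner ℂ w' w' = (1/2 : ℂ))
    (hzw' : inner ℂ z' w' = (0:ℂ)) :
    ∃ U : Matrix.specialUnitaryGroup (Fin (n + 1)) ℂ,
      (∀ a, z' a = ∑ j, (U : Matrix (Fin (n+1)) (Fin (n+1)) ℂ) a j * z j) ∧
      (∀ a, w' a = ∑ j, (U : Matrix (Fin (n+1)) (Fin (n+1)) ℂ) a j * w j) := by
  classical
  set c : ℂ := ((Real.sqrt 2 : ℝ) : ℂ) with hc
  have hc2 : c * c = 2 := by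
    rw [hc, ← Complex.ofReal_mul, Real.mul_self_sqrt (by norm_num)]
    norm_num
  have hcs : starRingEnd ℂ c = c := by simp [hc]
  have hcne : c ≠ 0 := by
    intro h
    rw [h, zero_mul] at hc2
    norm_num at hc2
  set i0 : Fin (n+1) := ⟨0, by omega⟩
  set i1 : Fin (n+1) := ⟨1, by omega⟩
  set i2 : Fin (n+1) := ⟨2, by omega⟩
  have h01 : i0 ≠ i1 := by simp [i0, i1, Fin.ext_iff]
  have h20 : i2 ≠ i0 := by simp [i2, i0, Fin.ext_iff]
  have h21 : i2 ≠ i1 := by simp [i2, i1, Fin.ext_iff]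
  have hinner : ∀ x y : EuclideanSpace ℂ (Fin (n+1)),
      (inner ℂ x y : ℂ) = ∑ a, starRingEnd ℂ (x a) * y a := by
    intro x y
    simp [PiLp.inner_apply, RCLike.inner_apply, mul_comm]
  have main : ∀ x y : EuclideanSpace ℂ (Fin (n+1)),
      (inner ℂ x x : ℂ) = 1/2 → (inner ℂ y y : ℂ) = 1/2 → (inner ℂ x y : ℂ) = 0 →
      ∃ b : OrthonormalBasis (Fin (n+1)) ℂ (EuclideanSpace ℂ (Fin (n+1))),
        b i0 = c • x ∧ b i1 = c • y := by
    intro x y hxx hyy hxy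
    set f : Fin (n+1) → EuclideanSpace ℂ (Fin (n+1)) :=
      fun i => if i = i0 then c • x else if i = i1 then c • y else 0 with hf
    have hyx : (inner ℂ y x : ℂ) = 0 := by
      rw [← inner_conj_symm, hxy, map_zero]
    have horth : Orthonormal ℂ ((Set.restrict {i0, i1} f)) := by
      rw [orthonormal_iff_ite]
      rintro ⟨i, hi⟩ ⟨j, hj⟩
      simp only [Set.mem_insert_iff, Set.mem_singleton_iff] at hi hj
      rcases hi with rfl | rfl <;> rcases hj with rfl | rfl <;>
        simp [f, Set.restrict, Set.domRestrict, -inner_self_eq_norm_sq_to_K, h01, h01.symm, Subtype.ext_iff, inner_smul_left, inner_smul_right, hxx, hyy,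
          hxy, hyx, hcs, ← mul_assoc, hc2]
    obtain ⟨b, hb⟩ := horth.exists_orthonormalBasis_extension_of_card_eq (by simp)
    refine ⟨b, ?_, ?_⟩
    · rw [hb i0 (by simp)]; simp [f]
    · rw [hb i1 (by simp)]; simp [f, h01.symm]
  obtain ⟨b, hb0, hb1⟩ := main z w hzz hww hzw
  obtain ⟨b', hb0', hb1'⟩ := main z' w' hzz' hww' hzw'
  set B : Matrix (Fin (n+1)) (Fin (n+1)) ℂ := Matrix.of fun a i => b i a with hB
  set B' : Matrix (Fin (n+1)) (Fin (n+1)) ℂ := Matrix.of fun a i => b' i a with hB'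
  have hBcol : ∀ (b : OrthonormalBasis (Fin (n+1)) ℂ (EuclideanSpace ℂ (Fin (n+1)))),
      star (Matrix.of fun a i => b i a) * (Matrix.of fun a i => b i a) = 1 := by
    intro b
    ext i j
    have := (orthonormal_iff_ite.mp b.orthonormal) i j
    rw [hinner] at this
    simpa [Matrix.mul_apply, Matrix.star_apply, Matrix.one_apply] using this
  have hBu : B ∈ Matrix.unitaryGroup (Fin (n+1)) ℂ :=
    Matrix.mem_unitaryGroup_iff'.mpr (hBcol b)
  have hBu' : B' ∈ Matrix.unitaryGroup (Fin (n+1)) ℂ :=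
    Matrix.mem_unitaryGroup_iff'.mpr (hBcol b')
  set d : ℂ := (B' * star B).det with hd
  have hdd : starRingEnd ℂ d * d = 1 := by
    have h1 : star (B' * star B) * (B' * star B) = 1 := by
      calc star (B' * star B) * (B' * star B)
          = B * (star B' * B') * star B := by
            simp [Matrix.star_mul, Matrix.mul_assoc]
      _ = 1 := by
            rw [Matrix.mem_unitaryGroup_iff'.mp hBu']
            rw [Matrix.mul_one, mul_eq_one_comm.mp (Matrix.mem_unitaryGroup_iff'.mp hBu)]
    have h2 : (star (B' * star B)).det = starRingEnd ℂ d := by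
      rw [show star (B' * star B) = (B' * star B)ᴴ from rfl, Matrix.det_conjTranspose, hd]
      rfl
    calc starRingEnd ℂ d * d = (star (B' * star B)).det * (B' * star B).det := by rw [h2, hd]
    _ = 1 := by rw [← Matrix.det_mul, h1, Matrix.det_one]
  set D : Matrix (Fin (n+1)) (Fin (n+1)) ℂ :=
    Matrix.diagonal (fun k => if k = i2 then starRingEnd ℂ d else 1) with hD
  have hDu : D ∈ Matrix.unitaryGroup (Fin (n+1)) ℂ := by
    rw [Matrix.mem_unitaryGroup_iff', hD, Matrix.star_eq_conjTranspose,
      Matrix.diagonal_conjTranspose, Matrix.diagonal_mul_diagonal, ← Matrix.diagonal_one]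
    refine congrArg Matrix.diagonal (funext fun k => ?_)
    simp only [Pi.mul_apply, Pi.star_apply]
    show star (if k = i2 then starRingEnd ℂ d else 1) * (if k = i2 then starRingEnd ℂ d else 1) = 1
    split_ifs with hk
    · rw [Complex.star_def, Complex.conj_conj, mul_comm]
      exact hdd
    · rw [star_one, one_mul]
  set U : Matrix (Fin (n+1)) (Fin (n+1)) ℂ := B' * (D * star B) with hU
  have hUu : U ∈ Matrix.unitaryGroup (Fin (n+1)) ℂ :=
    mul_mem hBu' (mul_mem hDu (Unitary.star_mem hBu))
  have hdet : U.det = 1 := by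
    have hDdet : D.det = starRingEnd ℂ d := by
      rw [hD, Matrix.det_diagonal]
      rw [Finset.prod_ite_eq' Finset.univ i2 (fun _ => starRingEnd ℂ d)]
      simp
    rw [hU, Matrix.det_mul, Matrix.det_mul, hDdet]
    have h3 : B'.det * (starRingEnd ℂ d * (star B).det)
        = (B'.det * (star B).det) * starRingEnd ℂ d := by
      ring
    rw [h3, ← Matrix.det_mul, ← hd, mul_comm]
    exact hdd
  have hmv : ∀ (M : Matrix (Fin (n+1)) (Fin (n+1)) ℂ) (y : Fin (n+1) → ℂ) k,
      M.mulVec y k = ∑ j, M k j * y j := by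
    intro M y k
    simp [Matrix.mulVec, dotProduct]
  have haction : ∀ (x x' : EuclideanSpace ℂ (Fin (n+1))) (i : Fin (n+1)),
      b i = c • x → b' i = c • x' → i ≠ i2 → ∀ a, x' a = ∑ j, U a j * x j := by
    intro x x' i hbi hbi' hi2 a
    have hstep1 : ∀ k, ∑ j, (star B) k j * x j = if k = i then c⁻¹ else 0 := by
      intro k
      have horth := (orthonormal_iff_ite.mp b.orthonormal) k i
      rw [hinner, hbi] at horth
      have h3 : ∑ j, starRingEnd ℂ (b k j) * (c • x) j = c * ∑ j, starRingEnd ℂ (b k j) * x j := by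
        rw [Finset.mul_sum]
        refine Finset.sum_congr rfl fun j _ => ?_
        simp [smul_eq_mul]
        ring
      rw [h3] at horth
      have h4 : ∑ j, starRingEnd ℂ (b k j) * x j = c⁻¹ * (if k = i then 1 else 0) := by
        rw [← horth, ← mul_assoc, inv_mul_cancel₀ hcne, one_mul]
      have h5 : ∑ j, (star B) k j * x j = ∑ j, starRingEnd ℂ (b k j) * x j := by
        refine Finset.sum_congr rfl fun j _ => ?_
        rw [Matrix.star_apply]
        rfl
      rw [h5, h4]
      by_cases hk : k = i <;> simp [hk]
    have hstep2 : ∀ k, ∑ j, (D * star B) k j * x j = if k = i then c⁻¹ else 0 := by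
      intro k
      have h6 : ∑ j, (D * star B) k j * x j
          = (if k = i2 then starRingEnd ℂ d else 1) * ∑ j, (star B) k j * x j := by
        rw [Finset.mul_sum]
        refine Finset.sum_congr rfl fun j _ => ?_
        rw [hD, Matrix.diagonal_mul]
        ring
      rw [h6, hstep1]
      by_cases hk : k = i
      · subst hk
        rw [if_neg hi2, one_mul]
      · simp [hk]
    have h7 : (D * star B).mulVec x = fun k => if k = i then c⁻¹ else 0 :=
      funext fun k => (hmv _ _ _).trans (hstep2 k)
    calc x' a = c⁻¹ * (b' i a) := by
          rw [hbi']
          simp only [PiLp.smul_apply, smul_eq_mul, ← mul_assoc, inv_mul_cancel₀ hcne, one_mul]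
    _ = ∑ j, U a j * x j := by
        rw [show (∑ j, U a j * x j) = U.mulVec x a from (hmv U x a).symm, hU,
          ← Matrix.mulVec_mulVec, h7, hmv]
        simp only [mul_ite, mul_zero, Finset.sum_ite_eq' Finset.univ i, Finset.mem_univ, if_true]
        rw [mul_comm]
        rfl
  exact ⟨⟨U, Matrix.mem_specialUnitaryGroup_iff.mpr ⟨hUu, hdet⟩⟩,
    haction z z' i0 hb0 hb0' (fun h => h20 h.symm),
    haction w w' i1 hb1 hb1' (fun h => h21 h.symm)⟩

end aux

/-- Transitivity of the diagonal `SU(n+1)`-action on the sphere-level zero set of the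
`U(1)`-moment map. -/
theorem stmt_11 (n : ℕ) (hn : 2 ≤ n) (v v' : Fin (n + 1) → Quaternion ℝ)
    (hv : (∑ a, Quaternion.normSq (v a)) = 1) (hv' : (∑ a, Quaternion.normSq (v' a)) = 1)
    (hμv : μ v = 0) (hμv' : μ v' = 0) :
    ∃ U : Matrix.specialUnitaryGroup (Fin (n + 1)) ℂ,
      ∀ a, v' a = ∑ b, cq ((U : Matrix (Fin (n + 1)) (Fin (n + 1)) ℂ) a b) * v b := by
  classical
  -- complex coordinate vectors
  set Z : EuclideanSpace ℂ (Fin (n+1)) := WithLp.toLp 2 (fun a => (⟨(v a).re, (v a).imI⟩ : ℂ)) with hZdef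
  set W : EuclideanSpace ℂ (Fin (n+1)) := WithLp.toLp 2 (fun a => (⟨(v a).imJ, (v a).imK⟩ : ℂ)) with hWdef
  set Z' : EuclideanSpace ℂ (Fin (n+1)) := WithLp.toLp 2 (fun a => (⟨(v' a).re, (v' a).imI⟩ : ℂ)) with hZdef'
  set W' : EuclideanSpace ℂ (Fin (n+1)) := WithLp.toLp 2 (fun a => (⟨(v' a).imJ, (v' a).imK⟩ : ℂ)) with hWdef'
  -- derive the inner ℂ product conditions
  have conds : ∀ u : Fin (n+1) → Quaternion ℝ, (∑ a, Quaternion.normSq (u a)) = 1 → μ u = 0 →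
      ∀ (X Y : EuclideanSpace ℂ (Fin (n+1))),
        X = WithLp.toLp 2 (fun a => (⟨(u a).re, (u a).imI⟩ : ℂ)) → Y = WithLp.toLp 2 (fun a => (⟨(u a).imJ, (u a).imK⟩ : ℂ)) →
      (inner ℂ X X : ℂ) = 1/2 ∧ (inner ℂ Y Y : ℂ) = 1/2 ∧ (inner ℂ X Y : ℂ) = 0 := by
    intro u hu hμu X Y hX hY
    have hc := (mu_comp u).symm.trans hμu
    replace hc : _ ∧ _ ∧ _ ∧ _ := ⟨congrArg QuaternionAlgebra.re hc, congrArg QuaternionAlgebra.imI hc,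
      congrArg QuaternionAlgebra.imJ hc, congrArg QuaternionAlgebra.imK hc⟩
    obtain ⟨-, h1, h2, h3⟩ := hc
    simp only [Quaternion.imI_zero, Quaternion.imJ_zero, Quaternion.imK_zero] at h1 h2 h3
    have hXa : ∀ a, (X a).re = (u a).re ∧ (X a).im = (u a).imI := fun a => by rw [hX]; exact ⟨rfl, rfl⟩
    have hYa : ∀ a, (Y a).re = (u a).imJ ∧ (Y a).im = (u a).imK := fun a => by rw [hY]; exact ⟨rfl, rfl⟩
    have hsum : ∑ a, ((u a).re ^ 2 + (u a).imI ^ 2) + ∑ a, ((u a).imJ ^ 2 + (u a).imK ^ 2) = 1 := by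
      rw [← Finset.sum_add_distrib]
      refine Eq.trans ?_ hu
      refine Finset.sum_congr rfl fun a _ => ?_
      rw [Quaternion.normSq_def']
      ring
    have hdiff : ∑ a, ((u a).re ^ 2 + (u a).imI ^ 2) - ∑ a, ((u a).imJ ^ 2 + (u a).imK ^ 2) = 0 := by
      rw [← Finset.sum_sub_distrib]; refine Eq.trans ?_ h1
      refine Finset.sum_congr rfl fun a _ => ?_
      ring
    have hXX : ∑ a, ((u a).re ^ 2 + (u a).imI ^ 2) = 1/2 := by linarith
    have hYY : ∑ a, ((u a).imJ ^ 2 + (u a).imK ^ 2) = 1/2 := by linarith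
    have h2' : ∑ a, ((u a).imI * (u a).imJ - (u a).re * (u a).imK) = 0 := by
      have : (2:ℝ) * ∑ a, ((u a).imI * (u a).imJ - (u a).re * (u a).imK) = 0 := by
        rw [Finset.mul_sum]; exact h2
      linarith
    have h3' : ∑ a, ((u a).re * (u a).imJ + (u a).imI * (u a).imK) = 0 := by
      have : (2:ℝ) * ∑ a, ((u a).re * (u a).imJ + (u a).imI * (u a).imK) = 0 := by
        rw [Finset.mul_sum]; exact h3
      linarith
    refine ⟨?_, ?_, ?_⟩
    · rw [Complex.ext_iff]
      constructor
      · rw [inner_re, show ((1:ℂ)/2).re = 1/2 by norm_num, ← hXX]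
        refine Finset.sum_congr rfl fun a _ => ?_
        rw [(hXa a).1, (hXa a).2]
        ring
      · rw [inner_im, show ((1:ℂ)/2).im = 0 by norm_num]
        refine Finset.sum_eq_zero fun a _ => by ring
    · rw [Complex.ext_iff]
      constructor
      · rw [inner_re, show ((1:ℂ)/2).re = 1/2 by norm_num, ← hYY]
        refine Finset.sum_congr rfl fun a _ => ?_
        rw [(hYa a).1, (hYa a).2]
        ring
      · rw [inner_im, show ((1:ℂ)/2).im = 0 by norm_num]
        refine Finset.sum_eq_zero fun a _ => by ring
    · rw [Complex.ext_iff]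
      constructor
      · rw [inner_re, Complex.zero_re, ← h3']
        refine Finset.sum_congr rfl fun a _ => ?_
        rw [(hXa a).1, (hXa a).2, (hYa a).1, (hYa a).2]
      · have h2'' : ∑ a, ((u a).re * (u a).imK - (u a).imI * (u a).imJ) = 0 := by
          have heq : ∑ a, ((u a).re * (u a).imK - (u a).imI * (u a).imJ)
              = ∑ a, (-((u a).imI * (u a).imJ - (u a).re * (u a).imK)) :=
            Finset.sum_congr rfl fun a _ => by ring
          rw [heq, Finset.sum_neg_distrib, h2', neg_zero]
        rw [inner_im, Complex.zero_im, ← h2'']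
        refine Finset.sum_congr rfl fun a _ => ?_
        rw [(hXa a).1, (hXa a).2, (hYa a).1, (hYa a).2]
  obtain ⟨hZZ, hWW, hZW⟩ := conds v hv hμv Z W rfl rfl
  obtain ⟨hZZ', hWW', hZW'⟩ := conds v' hv' hμv' Z' W' rfl rfl
  obtain ⟨U, hUZ, hUW⟩ := key_su n hn Z W Z' W' hZZ hWW hZW hZZ' hWW' hZW'
  refine ⟨U, fun a => ?_⟩
  set M : Matrix (Fin (n+1)) (Fin (n+1)) ℂ := (U : Matrix (Fin (n+1)) (Fin (n+1)) ℂ) with hM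
  have hZa := congrArg Complex.re (hUZ a)
  have hZb := congrArg Complex.im (hUZ a)
  have hWa := congrArg Complex.re (hUW a)
  have hWb := congrArg Complex.im (hUW a)
  rw [Complex.re_sum] at hZa hWa
  rw [Complex.im_sum] at hZb hWb
  apply Quaternion.ext
  · rw [show (v' a).re = (Z' a).re from rfl, hZa, qsum_re]
    refine Finset.sum_congr rfl fun j _ => ?_
    rw [Complex.mul_re]
    show _ = (cq (M a j) * v j).re
    rw [Quaternion.re_mul]
    simp only [cq]
    show (M a j).re * (v j).re - (M a j).im * (v j).imI =
      (M a j).re * (v j).re - (M a j).im * (v j).imI - 0 * (v j).imJ - 0 * (v j).imK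
    ring
  · rw [show (v' a).imI = (Z' a).im from rfl, hZb, qsum_imI]
    refine Finset.sum_congr rfl fun j _ => ?_
    rw [Complex.mul_im]
    show _ = (cq (M a j) * v j).imI
    rw [Quaternion.imI_mul]
    show (M a j).re * (v j).imI + (M a j).im * (v j).re =
      (M a j).re * (v j).imI + (M a j).im * (v j).re + 0 * (v j).imK - 0 * (v j).imJ
    ring
  · rw [show (v' a).imJ = (W' a).re from rfl, hWa, qsum_imJ]
    refine Finset.sum_congr rfl fun j _ => ?_
    rw [Complex.mul_re]
    show _ = (cq (M a j) * v j).imJ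
    rw [Quaternion.imJ_mul]
    show (M a j).re * (v j).imJ - (M a j).im * (v j).imK =
      (M a j).re * (v j).imJ - (M a j).im * (v j).imK + 0 * (v j).re + 0 * (v j).imI
    ring
  · rw [show (v' a).imK = (W' a).im from rfl, hWb, qsum_imK]
    refine Finset.sum_congr rfl fun j _ => ?_
    rw [Complex.mul_im]
    show _ = (cq (M a j) * v j).imK
    rw [Quaternion.imK_mul]
    show (M a j).re * (v j).imK + (M a j).im * (v j).imJ =
      (M a j).re * (v j).imK + (M a j).im * (v j).imJ - 0 * (v j).imI + 0 * (v j).re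
    ring
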